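/- arXiv:1904.09638 — 5 statements merged into one kernel-verified Lean document; each statement's English description precedes it below -/
import Mathlib

section
/- Let θ ∈ (0,1) and α, λ, β be real numbers satisfying the three equations: (i) -θ/6 = (α-β)·√((1-θ²)/3) + (α²-αβ)·θ, (ii) √3·α + √3/(6(α-λ)) = θ/√(1-θ²) with α ≠ λ, (iii) -√3·λ - √3/(12(α-λ)) = √(1-θ²)/θ. Then the equation -√(1-θ²)/6 = -(√3/3)·(2α-λ-β)·θ + (αλ+αβ-2λβ)·√(1-θ²) fails; i.e., the four equations are jointly inconsistent. -/
open Real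

theorem stmt_0 (θ α lam β : ℝ) (hθ0 : 0 < θ) (hθ1 : θ < 1)
    (hal : α ≠ lam)
    (h1 : -θ/6 = (α - β) * Real.sqrt ((1 - θ^2)/3) + (α^2 - α*β) * θ)
    (h2 : Real.sqrt 3 * α + Real.sqrt 3 / (6*(α - lam)) = θ / Real.sqrt (1 - θ^2))
    (h3 : -Real.sqrt 3 * lam - Real.sqrt 3 / (12*(α - lam)) = Real.sqrt (1 - θ^2) / θ) :
    ¬ (-Real.sqrt (1 - θ^2)/6 =
        -(Real.sqrt 3/3) * (2*α - lam - β) * θ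
        + (α*lam + α*β - 2*lam*β) * Real.sqrt (1 - θ^2)) := by
  intro h4
  have hpos : (0:ℝ) < 1 - θ^2 := by nlinarith
  set s := Real.sqrt (1 - θ^2) with hsdef
  set t := Real.sqrt 3 with htdef
  have hs0 : 0 < s := Real.sqrt_pos.2 hpos
  have hs2 : s^2 = 1 - θ^2 := Real.sq_sqrt hpos.le
  have ht0 : 0 < t := Real.sqrt_pos.2 (by norm_num)
  have ht2 : t^2 = 3 := Real.sq_sqrt (by norm_num)
  have hd : α - lam ≠ 0 := sub_ne_zero.2 hal
  have hsq : Real.sqrt ((1 - θ^2)/3) = s*t/3 := by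
    rw [show (1 - θ^2)/3 = (s*t/3)^2 by rw [div_pow, mul_pow, hs2, ht2]; ring,
      Real.sqrt_sq (by positivity)]
  rw [hsq] at h1
  -- polynomial forms of h2 and h3
  have P2 : 6*t*α*(α-lam)*s + t*s = 6*θ*(α-lam) := by
    field_simp at h2
    linear_combination h2
  have P3 : -(12*t*lam*θ*(α-lam)) - t*θ = 12*s*(α-lam) := by
    field_simp at h3
    linear_combination h3
  -- key intermediate identity
  have hBd : (α-lam) * (t*θ*s*(α-2*lam)) = (α-lam) * (θ^2+2*s^2) := by
    linear_combination (θ/6)*P2 + (s/6)*P3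
  have hB : t*θ*s*(α-2*lam) = θ^2+2*s^2 := mul_left_cancel₀ hd hBd
  have hu : α - β = 0 := by
    linear_combination (t*θ/2)*h4 - ((α-β)/2)*hB + (θ/12)*P2
      - (θ^2*(2*α-lam-β)/6)*ht2 - (α-β)*hs2
  have hz : θ = 0 := by
    linear_combination (-6)*h1 - (2*s*t+6*α*θ)*hu
  linarith
end

section
/- Let θ ∈ (0,1), let α be a real number, and suppose λ, β are real numbers satisfying θ = 4√3(α-λ)√(1-θ²) + 12λ(λ-α)θ and θ = 4√3(α-β)√(1-θ²) + 12β(β-α)θ with λ ≠ β, and additionally -√(1-θ²) = 2√3·θ(2α-λ-β) + 6(αλ+αβ-2λβ)√(1-θ²). Then λ + β = (3αθ + √(3(1-θ²)))/(3θ), λβ = (4α√(3(1-θ²)) - θ)/(12θ), and α·(α√(1-θ²) + (2θ²-1)/(√3·θ)) = 0; hence α = 0 or α = (1-2θ²)/(θ√(3(1-θ²))). -/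
theorem stmt_3 (θ α lam β : ℝ) (hθ0 : 0 < θ) (hθ1 : θ < 1) (hlb : lam ≠ β)
    (h1 : θ = 4*Real.sqrt 3*(α - lam)*Real.sqrt (1 - θ^2) + 12*lam*(lam - α)*θ)
    (h2 : θ = 4*Real.sqrt 3*(α - β)*Real.sqrt (1 - θ^2) + 12*β*(β - α)*θ)
    (h3 : -Real.sqrt (1 - θ^2) = 2*Real.sqrt 3*θ*(2*α - lam - β)
          + 6*(α*lam + α*β - 2*lam*β)*Real.sqrt (1 - θ^2)) :
    lam + β = (3*α*θ + Real.sqrt (3*(1 - θ^2)))/(3*θ) ∧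
    lam*β = (4*α*Real.sqrt (3*(1 - θ^2)) - θ)/(12*θ) ∧
    α * (α*Real.sqrt (1 - θ^2) + (2*θ^2 - 1)/(Real.sqrt 3*θ)) = 0 ∧
    (α = 0 ∨ α = (1 - 2*θ^2)/(θ*Real.sqrt (3*(1 - θ^2)))) := by
  set s := Real.sqrt (1 - θ^2) with hs_def
  set r := Real.sqrt 3 with hr_def
  have h1θ : (0:ℝ) < 1 - θ^2 := by nlinarith
  have hs : s^2 = 1 - θ^2 := Real.sq_sqrt (le_of_lt h1θ)
  have hr : r^2 = 3 := Real.sq_sqrt (by norm_num)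
  have hspos : 0 < s := Real.sqrt_pos.mpr h1θ
  have hrpos : 0 < r := Real.sqrt_pos.mpr (by norm_num)
  have hsq3 : Real.sqrt (3*(1 - θ^2)) = r * s := Real.sqrt_mul (by norm_num) _
  have hθne : θ ≠ 0 := ne_of_gt hθ0
  have hrne : r ≠ 0 := ne_of_gt hrpos
  have hsne : s ≠ 0 := ne_of_gt hspos
  -- sum
  have key1 : (lam - β) * (12*θ*(lam + β - α) - 4*r*s) = 0 := by
    linear_combination h2 - h1
  have hS : 3*θ*(lam + β) = 3*α*θ + r*s := by
    rcases mul_eq_zero.mp key1 with h | h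
    · exact absurd (sub_eq_zero.mp h) hlb
    · linarith
  -- product
  have key2 : (β - lam) * (θ - 4*r*s*α + 12*θ*(lam*β)) = 0 := by
    linear_combination β*h1 - lam*h2
  have hP : 12*θ*(lam*β) = 4*α*r*s - θ := by
    rcases mul_eq_zero.mp key2 with h | h
    · exact absurd (sub_eq_zero.mp h).symm hlb
    · linarith
  -- alpha equation
  have hkey3 : α*(3*α*s*θ - r*(1 - 2*θ^2)) = 0 := by
    linear_combination (-(θ/2))*h3 + (-(α*s - r*θ/3))*hS + (s/2)*hP + (α*r)*hs + (θ*s/3)*hr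
  have h4 : α*(α*s*r*θ + 2*θ^2 - 1) = 0 := by
    linear_combination (r/3)*hkey3 + (α/3 - 2*α*θ^2/3)*hr
  refine ⟨?_, ?_, ?_, ?_⟩
  · rw [hsq3]; field_simp; linarith
  · rw [hsq3]; field_simp; linarith
  · have hrt : r*θ ≠ 0 := mul_ne_zero hrne hθne
    field_simp
    linear_combination h4
  · rcases mul_eq_zero.mp h4 with h | h
    · exact Or.inl h
    · right
      rw [hsq3]
      have hden : θ*(r*s) ≠ 0 := mul_ne_zero hθne (mul_ne_zero hrne hsne)
      field_simp
      linarith [h]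
end

section
/- On S³×S³ define P on tangent vectors Z = (U,V) at (p,q) by PZ = (pq⁻¹V, qp⁻¹U), and J by JZ = (1/√3)(2pq⁻¹V - U, -2qp⁻¹U + V). Then P² = Id and P anticommutes with J: P(JZ) = -J(PZ) for all tangent Z. -/
noncomputable def nkJ (p q : Quaternion ℝ) (Z : Quaternion ℝ × Quaternion ℝ) :
    Quaternion ℝ × Quaternion ℝ :=
  (Real.sqrt 3)⁻¹ • (2 • (p * q⁻¹ * Z.2) - Z.1, -(2 • (q * p⁻¹ * Z.1)) + Z.2)

noncomputable def nkP (p q : Quaternion ℝ) (Z : Quaternion ℝ × Quaternion ℝ) :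
    Quaternion ℝ × Quaternion ℝ :=
  (p * q⁻¹ * Z.2, q * p⁻¹ * Z.1)

theorem stmt_11 (p q : Quaternion ℝ) (hp : ‖p‖ = 1) (hq : ‖q‖ = 1)
    (Z : Quaternion ℝ × Quaternion ℝ) :
    nkP p q (nkP p q Z) = Z ∧ nkP p q (nkJ p q Z) = -(nkJ p q (nkP p q Z)) := by
  have hp0 : p ≠ 0 := by intro h; simp [h] at hp
  have hq0 : q ≠ 0 := by intro h; simp [h] at hq
  constructor
  · simp [nkP, Prod.ext_iff, mul_assoc, ← mul_assoc q⁻¹ q, ← mul_assoc p⁻¹ p,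
      inv_mul_cancel₀ hp0, inv_mul_cancel₀ hq0, ← mul_assoc p p⁻¹, ← mul_assoc q q⁻¹,
      mul_inv_cancel₀ hp0, mul_inv_cancel₀ hq0]
  · simp only [nkP, nkJ, Prod.smul_mk, Prod.neg_mk, Prod.ext_iff, Prod.mk.injEq]
    constructor <;>
    · rw [← smul_neg]
      simp [mul_add, mul_sub, mul_neg, smul_sub, smul_add, mul_smul_comm, mul_assoc,
        ← mul_assoc q⁻¹ q, ← mul_assoc p⁻¹ p, inv_mul_cancel₀ hp0, inv_mul_cancel₀ hq0, two_mul, mul_add]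
      abel
end

section
/- On S³×S³ with the almost product structure P given by PZ = (pq⁻¹V, qp⁻¹U) for Z = (U,V) at (p,q), and J as in the homogeneous nearly Kähler structure, the product structure Q defined by QZ = (-U, V) satisfies QZ = (1/√3)(2PJZ - JZ) for all tangent vectors Z, and Q² = Id. -/
def nkQ (Z : Quaternion ℝ × Quaternion ℝ) : Quaternion ℝ × Quaternion ℝ :=
  (-Z.1, Z.2)

theorem stmt_12 (p q : Quaternion ℝ) (hp : ‖p‖ = 1) (hq : ‖q‖ = 1)
    (Z : Quaternion ℝ × Quaternion ℝ) :
    nkQ Z = (Real.sqrt 3)⁻¹ • (2 • nkP p q (nkJ p q Z) - nkJ p q Z) ∧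
    nkQ (nkQ Z) = Z := by
  have hp0 : p ≠ 0 := by rintro rfl; simp at hp
  have hq0 : q ≠ 0 := by rintro rfl; simp at hq
  have h1 : p * q⁻¹ * (q * p⁻¹) = 1 := by
    rw [mul_assoc, ← mul_assoc q⁻¹, inv_mul_cancel₀ hq0, one_mul, mul_inv_cancel₀ hp0]
  have h2 : q * p⁻¹ * (p * q⁻¹) = 1 := by
    rw [mul_assoc, ← mul_assoc p⁻¹, inv_mul_cancel₀ hp0, one_mul, mul_inv_cancel₀ hq0]
  have hs : (Real.sqrt 3)⁻¹ * (Real.sqrt 3)⁻¹ * 3 = 1 := by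
    rw [← mul_inv]
    rw [show Real.sqrt 3 * Real.sqrt 3 = 3 from Real.mul_self_sqrt (by norm_num)]
    norm_num
  refine ⟨?_, by simp [nkQ]⟩
  simp only [nkQ, nkP, nkJ, Prod.smul_mk, Prod.mk_sub_mk, Prod.mk.injEq,
    smul_smul, mul_add, mul_sub, mul_neg, smul_sub, smul_add, smul_neg,
    mul_smul_comm, ← mul_assoc, h1, h2, one_mul]
  constructor <;>
  · match_scalars <;> nlinarith [hs]
end

section
/- On S³×S³ define the metric g(Z,Z') = (4/3)(⟨U,U'⟩ + ⟨V,V'⟩) - (2/3)(⟨p⁻¹U, q⁻¹V'⟩ + ⟨p⁻¹U', q⁻¹V⟩) for tangent vectors Z = (U,V), Z' = (U',V') at (p,q), where ⟨·,·⟩ is the Euclidean inner product on ℍ ≅ ℝ⁴. Then g is compatible with J, i.e., g(JZ, JZ') = g(Z,Z') for all tangent vectors Z, Z', where JZ = (1/√3)(2pq⁻¹V - U, -2qp⁻¹U + V). -/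
open RealInnerProductSpace

noncomputable def nkMetric (p q : Quaternion ℝ)
    (Z Z' : Quaternion ℝ × Quaternion ℝ) : ℝ :=
  (4/3) * (⟪Z.1, Z'.1⟫ + ⟪Z.2, Z'.2⟫)
    - (2/3) * (⟪p⁻¹ * Z.1, q⁻¹ * Z'.2⟫ + ⟪p⁻¹ * Z'.1, q⁻¹ * Z.2⟫)

lemma re_mul_comm' (a b : Quaternion ℝ) : (a * b).re = (b * a).re := by
  simp [Quaternion.re_mul]; ring

lemma inner_unit_mul (u : Quaternion ℝ) (hu : ‖u‖ = 1) (x y : Quaternion ℝ) :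
    ⟪u*x, u*y⟫ = ⟪x, y⟫ := by
  have h1 : Quaternion.normSq u = 1 := by
    have := Quaternion.normSq_eq_norm_mul_self (a := u)
    rw [hu] at this; simp [this]
  rw [Quaternion.inner_def, Quaternion.inner_def]
  have h2 : u * x * star (u * y) = u * (x * star y * star u) := by
    rw [star_mul]; noncomm_ring
  rw [h2, re_mul_comm']
  have h3 : x * star y * star u * u = x * star y := by
    rw [mul_assoc, Quaternion.star_mul_self, h1]; simp
  rw [h3]

lemma metric_eq (p q : Quaternion ℝ) (hp : ‖p‖ = 1) (hq : ‖q‖ = 1)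
    (u v u' v' : Quaternion ℝ) :
    nkMetric p q (p*u, q*v) (p*u', q*v')
      = (4/3) * (⟪u,u'⟫ + ⟪v,v'⟫) - (2/3) * (⟪u,v'⟫ + ⟪u',v⟫) := by
  have hp0 : p ≠ 0 := by intro h; rw [h] at hp; simp at hp
  have hq0 : q ≠ 0 := by intro h; rw [h] at hq; simp at hq
  simp only [nkMetric, inv_mul_cancel_left₀ hp0, inv_mul_cancel_left₀ hq0,
    inner_unit_mul p hp, inner_unit_mul q hq]

lemma aux13 (p q : Quaternion ℝ) (hp : ‖p‖ = 1) (hq : ‖q‖ = 1)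
    (x y x' y' : Quaternion ℝ) :
    nkMetric p q (nkJ p q (p*x, q*y)) (nkJ p q (p*x', q*y'))
      = nkMetric p q (p*x, q*y) (p*x', q*y') := by
  have hp0 : p ≠ 0 := by intro h; rw [h] at hp; simp at hp
  have hq0 : q ≠ 0 := by intro h; rw [h] at hq; simp at hq
  set s : ℝ := (Real.sqrt 3)⁻¹ with hs_def
  have hJ : ∀ a b : Quaternion ℝ,
      nkJ p q (p*a, q*b) = (p * (s • (2 • b - a)), q * (s • (-(2 • a) + b))) := by
    intro a b
    have e1 : p * q⁻¹ * (q * b) = p * b := by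
      rw [mul_assoc, inv_mul_cancel_left₀ hq0]
    have e2 : q * p⁻¹ * (p * a) = q * a := by
      rw [mul_assoc, inv_mul_cancel_left₀ hp0]
    have f1 : p * (s • (2 • b - a)) = s • (2 • (p*b) - p*a) := by
      rw [mul_smul_comm, mul_sub, mul_smul_comm]
    have f2 : q * (s • (-(2 • a) + b)) = s • (-(2 • (q*a)) + q*b) := by
      rw [mul_smul_comm, mul_add, mul_neg, mul_smul_comm]
    simp only [nkJ, e1, e2, f1, f2, Prod.smul_mk]
    rfl
  rw [hJ, hJ, metric_eq p q hp hq, metric_eq p q hp hq]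
  have hs : s * s = 1/3 := by
    rw [hs_def, ← mul_inv, Real.mul_self_sqrt (by norm_num)]; norm_num
  simp only [real_inner_smul_left, real_inner_smul_right, inner_sub_left, inner_sub_right,
    inner_add_left, inner_add_right, inner_neg_left, inner_neg_right, two_nsmul]
  have cP : ⟪x',x⟫ = ⟪x,x'⟫ := real_inner_comm _ _
  have cQ : ⟪y',y⟫ = ⟪y,y'⟫ := real_inner_comm _ _
  have cR : ⟪y',x⟫ = ⟪x,y'⟫ := real_inner_comm _ _
  have cS : ⟪y,x'⟫ = ⟪x',y⟫ := real_inner_comm _ _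
  linear_combination (4*⟪x',x⟫ + 4*⟪y',y⟫ - 2*⟪y',x⟫ - 2*⟪y,x'⟫) * hs
    + (4/3)*cP + (4/3)*cQ - (2/3)*cR - (2/3)*cS
    - (16/3)*(s*s)*cP - (16/3)*(s*s)*cQ + (14/3)*(s*s)*cR - (2/3)*(s*s)*cS

theorem stmt_13 (p q : Quaternion ℝ) (hp : ‖p‖ = 1) (hq : ‖q‖ = 1)
    (Z Z' : Quaternion ℝ × Quaternion ℝ) :
    nkMetric p q (nkJ p q Z) (nkJ p q Z') = nkMetric p q Z Z' := by
  have hp0 : p ≠ 0 := by intro h; rw [h] at hp; simp at hp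
  have hq0 : q ≠ 0 := by intro h; rw [h] at hq; simp at hq
  have h1 : Z = (p * (p⁻¹ * Z.1), q * (q⁻¹ * Z.2)) := by
    rw [mul_inv_cancel_left₀ hp0, mul_inv_cancel_left₀ hq0]
  have h2 : Z' = (p * (p⁻¹ * Z'.1), q * (q⁻¹ * Z'.2)) := by
    rw [mul_inv_cancel_left₀ hp0, mul_inv_cancel_left₀ hq0]
  rw [h1, h2]
  exact aux13 p q hp hq _ _ _ _
end
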